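/- If p is an extreme point of a compact convex body X in ℝⁿ and U is an open neighborhood of p, then there exists a hyperplane strictly separating p from X \ U. -/

import Mathlib

open RealInnerProductSpace

private lemma pad_dite_sum {M : Type*} [AddCommMonoid M] {k n : ℕ} (hkn : k ≤ n) (F : Fin k → M) :
    (∑ j : Fin n, if h : (j : ℕ) < k then F ⟨j, h⟩ else 0) = ∑ j, F j := by
  set f : ℕ → M := fun j => if h : j < k then F ⟨j, h⟩ else 0 with hf
  have h1 : (∑ j : Fin n, if h : (j : ℕ) < k then F ⟨j, h⟩ else 0) = ∑ j ∈ Finset.range n, f j :=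
    Fin.sum_univ_eq_sum_range f n
  have h2 : ∑ j ∈ Finset.range n, f j = ∑ j ∈ Finset.range k, f j :=
    (Finset.sum_subset (Finset.range_subset_range.2 hkn) (by
      intro x _ hx
      rw [hf]
      simp only [Finset.mem_range, not_lt] at hx
      exact dif_neg (by omega))).symm
  have h3 : ∑ j ∈ Finset.range k, f j = ∑ j : Fin k, f ↑j := (Fin.sum_univ_eq_sum_range f k).symm
  have h4 : ∑ j : Fin k, f ↑j = ∑ j, F j := by
    refine Finset.sum_congr rfl fun j _ => ?_
    simp [hf, j.isLt]
  rw [h1, h2, h3, h4]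

private lemma isCompact_convexHull_fd {E : Type*} [NormedAddCommGroup E] [NormedSpace ℝ E]
    [FiniteDimensional ℝ E] {s : Set E} (hs : IsCompact s) :
    IsCompact (convexHull ℝ s) := by
  rcases s.eq_empty_or_nonempty with rfl | ⟨s₀, hs₀⟩
  · simp [convexHull_empty, isCompact_empty]
  set d := Module.finrank ℝ E + 1 with hd
  set f : (Fin d → ℝ) × (Fin d → E) → E := fun q => ∑ i, q.1 i • q.2 i with hfdef
  have hcf : Continuous f := by
    apply continuous_finset_sum
    intro i _
    exact ((continuous_apply i).comp continuous_fst).smul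
      ((continuous_apply i).comp continuous_snd)
  have hT : IsCompact ((stdSimplex ℝ (Fin d)) ×ˢ Set.pi Set.univ fun _ : Fin d => s) :=
    (isCompact_stdSimplex (𝕜 := ℝ) (ι := Fin d)).prod (isCompact_univ_pi fun _ => hs)
  have himg : convexHull ℝ s = f '' ((stdSimplex ℝ (Fin d)) ×ˢ Set.pi Set.univ fun _ : Fin d => s) := by
    apply Set.Subset.antisymm
    · intro x hx
      rw [convexHull_eq_union] at hx
      simp only [Set.mem_iUnion] at hx
      obtain ⟨t, hts, hti, hxt⟩ := hx
      rw [Finset.convexHull_eq] at hxt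
      obtain ⟨w, hw0, hw1, hwx⟩ := hxt
      rw [t.centerMass_eq_of_sum_1 _ hw1] at hwx
      have hcard : t.card ≤ d := by
        have := hti.card_le_finrank_succ
        rw [Fintype.card_coe] at this
        exact this.trans (add_le_add_left (Submodule.finrank_le _) 1)
      set e := t.equivFin with he
      set W : Fin d → ℝ := fun j => if h : (j : ℕ) < t.card then w (e.symm ⟨j, h⟩) else 0 with hW
      set G : Fin d → E := fun j => if h : (j : ℕ) < t.card then ((e.symm ⟨j, h⟩ : t) : E) else s₀
        with hG
      refine ⟨(W, G), ⟨⟨fun j => ?_, ?_⟩, fun j _ => ?_⟩, ?_⟩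
      · by_cases h : (j : ℕ) < t.card
        · simp only [hW, dif_pos h]
          exact hw0 _ (e.symm ⟨j, h⟩).2
        · simp [hW, dif_neg h]
      · rw [hW]
        rw [pad_dite_sum hcard (fun j => w (e.symm j))]
        rw [Equiv.sum_comp e.symm (fun y : t => w y)]
        rw [Finset.sum_coe_sort t w]
        exact hw1
      · by_cases h : (j : ℕ) < t.card
        · simp only [hG, dif_pos h]
          exact hts (e.symm ⟨j, h⟩).2
        · simpa [hG, dif_neg h] using hs₀
      · show ∑ i, W i • G i = x
        have : ∀ j : Fin d, W j • G j =
            if h : (j : ℕ) < t.card then w (e.symm ⟨j, h⟩) • ((e.symm ⟨j, h⟩ : t) : E) else 0 := by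
          intro j
          by_cases h : (j : ℕ) < t.card
          · simp [hW, hG, dif_pos h]
          · simp [hW, hG, dif_neg h]
        rw [Finset.sum_congr rfl fun j _ => this j]
        rw [pad_dite_sum hcard (fun j => w (e.symm j) • ((e.symm j : t) : E))]
        rw [Equiv.sum_comp e.symm (fun y : t => w y • (y : E))]
        rw [Finset.sum_coe_sort t (fun y => w y • (y : E))]
        simpa using hwx
    · rintro x ⟨⟨w, g⟩, ⟨⟨hw0, hw1⟩, hg⟩, rfl⟩
      exact (convex_convexHull ℝ s).sum_mem (fun i _ => hw0 i) hw1
        (fun i _ => subset_convexHull ℝ s (hg i (Set.mem_univ i)))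
  rw [himg]
  exact hT.image hcf

/-- An extreme point of a compact convex body can be strictly separated by a
hyperplane from the complement of any open neighborhood of it. -/
theorem extreme_point_strict_separation (n : ℕ)
    (X : Set (EuclideanSpace ℝ (Fin n)))
    (hne : X.Nonempty) (hX : IsCompact X) (hconv : Convex ℝ X)
    (p : EuclideanSpace ℝ (Fin n)) (hp : p ∈ X.extremePoints ℝ)
    (U : Set (EuclideanSpace ℝ (Fin n))) (hU : IsOpen U) (hpU : p ∈ U) :
    ∃ (a : EuclideanSpace ℝ (Fin n)) (c : ℝ),
      c < ⟪a, p⟫ ∧ ∀ y ∈ X \ U, ⟪a, y⟫ < c := by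
  set K := convexHull ℝ (X \ U) with hK
  have hKX : K ⊆ X := convexHull_min Set.diff_subset hconv
  have hpK : p ∉ K := by
    intro hpk
    have hpe : p ∈ K.extremePoints ℝ := by
      obtain ⟨hpX, hp'⟩ := hp
      exact ⟨hpk, fun x hx y hy h => hp' (hKX hx) (hKX hy) h⟩
    have := extremePoints_convexHull_subset hpe
    exact this.2 hpU
  have hKc : IsCompact K := isCompact_convexHull_fd (hX.diff hU)
  obtain ⟨f, u, hfs, hfp⟩ :=
    geometric_hahn_banach_closed_point (convex_convexHull ℝ _) hKc.isClosed hpK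
  refine ⟨(InnerProductSpace.toDual ℝ _).symm f, u, ?_, ?_⟩
  · simpa [InnerProductSpace.toDual_symm_apply] using hfp
  · intro y hy
    simpa [InnerProductSpace.toDual_symm_apply] using hfs y (subset_convexHull ℝ _ hy)
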